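/- Let α, β, γ ≥ 0 with β ≥ 4α and γ ≥ A e − α + β for some 0 < A ≤ 1. Let θ ∈ (0,2π), m ≥ 1, r = exp(e^{iθ}), s = m e^{iθ} r, and t, u ∈ ℂ satisfy Re(1 + t/s) ≥ m(1 + cos θ) and Re(u/s) ≥ m cos 2θ with cos 2θ ≥ 0. Then |α u + β t + γ s| ≥ A. -/

import Mathlib

open Real Complex

theorem stmt_9 (A α β γ θ m : ℝ)
    (hA : 0 < A) (hA1 : A ≤ 1) (hα : 0 ≤ α) (hβ : 0 ≤ β) (hγ0 : 0 ≤ γ) (hβα : 4 * α ≤ β)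
    (hγ : A * Real.exp 1 - α + β ≤ γ)
    (hθ : θ ∈ Set.Ioo 0 (2 * Real.pi)) (hcos : 0 ≤ Real.cos (2 * θ)) (hm : 1 ≤ m)
    (r s t u : ℂ)
    (hr : r = Complex.exp (Complex.exp (θ * Complex.I)))
    (hs : s = (m : ℂ) * Complex.exp (θ * Complex.I) * r)
    (hs0 : s ≠ 0)
    (ht : m * (1 + Real.cos θ) ≤ (1 + t / s).re)
    (hu : m * Real.cos (2 * θ) ≤ (u / s).re) :
    A ≤ ‖(α : ℂ) * u + (β : ℂ) * t + (γ : ℂ) * s‖ := by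
  have hc1 : -1 ≤ Real.cos θ := Real.neg_one_le_cos θ
  have hc2 : Real.cos θ ≤ 1 := Real.cos_le_one θ
  have hcos2 : Real.cos (2 * θ) = 2 * Real.cos θ ^ 2 - 1 := Real.cos_two_mul θ
  have hm0 : (0:ℝ) < m := lt_of_lt_of_le one_pos hm
  set z : ℂ := (α : ℂ) * u + (β : ℂ) * t + (γ : ℂ) * s with hz
  -- |s| = m * exp (cos θ)
  have habs_s : ‖s‖ = m * Real.exp (Real.cos θ) := by
    rw [hs, hr, norm_mul, norm_mul, Complex.norm_exp, Complex.norm_exp,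
      Complex.exp_ofReal_mul_I_re]
    simp [abs_of_pos hm0]
  -- z / s
  have hzs : z / s = (α : ℂ) * (u / s) + (β : ℂ) * (t / s) + (γ : ℂ) := by
    rw [hz, add_div, add_div, mul_div_assoc, mul_div_assoc, mul_div_assoc, div_self hs0, mul_one]
  have hre : (z / s).re = α * (u / s).re + β * (t / s).re + γ := by
    rw [hzs]; simp
  have htre : m * (1 + Real.cos θ) - 1 ≤ (t / s).re := by
    have : (1 + t / s).re = 1 + (t / s).re := by simp
    linarith [ht, this.symm.le, this.le]
  -- lower bound on the real part
  have hE : A * Real.exp 1 ≤ (z / s).re := by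
    rw [hre]
    have h1 : α * (m * (2 * Real.cos θ ^ 2 - 1)) ≤ α * (u / s).re := by
      rw [← hcos2]; exact mul_le_mul_of_nonneg_left hu hα
    have h2 : β * (m * (1 + Real.cos θ) - 1) ≤ β * (t / s).re :=
      mul_le_mul_of_nonneg_left htre hβ
    have key : 0 ≤ α * (m * (2 * Real.cos θ ^ 2 - 1) - 1) + β * (m * (1 + Real.cos θ)) := by
      nlinarith [mul_nonneg (sub_nonneg.mpr hβα) (mul_nonneg hm0.le (by linarith : (0:ℝ) ≤ 1 + Real.cos θ)),
        mul_nonneg hα (sub_nonneg.mpr hm),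
        mul_nonneg (mul_nonneg hα hm0.le) (sq_nonneg (Real.cos θ + 1))]
    linarith [h1, h2, hγ, key]
  have hEpos : 0 < (z / s).re := lt_of_lt_of_le (by positivity) hE
  -- combine
  have hrele : (z / s).re ≤ ‖z‖ / ‖s‖ := by
    have := Complex.re_le_norm (z / s)
    rwa [norm_div] at this
  have hspos : 0 < ‖s‖ := by
    rw [habs_s]; positivity
  have h3 : A ≤ ‖s‖ * (z / s).re := by
    rw [habs_s]
    have hexp : Real.exp (Real.cos θ) * Real.exp 1 = Real.exp (Real.cos θ + 1) :=
      (Real.exp_add _ _).symm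
    have h4 : (1:ℝ) ≤ Real.exp (Real.cos θ + 1) := Real.one_le_exp (by linarith)
    have h5 : m * Real.exp (Real.cos θ) * (A * Real.exp 1) ≤
        m * Real.exp (Real.cos θ) * (z / s).re := by
      apply mul_le_mul_of_nonneg_left hE
      positivity
    calc A = A * 1 := (mul_one A).symm
      _ ≤ A * (m * Real.exp (Real.cos θ + 1)) := by
          apply mul_le_mul_of_nonneg_left _ hA.le
          nlinarith [Real.exp_pos (Real.cos θ + 1)]
      _ = m * Real.exp (Real.cos θ) * (A * Real.exp 1) := by
          rw [← hexp]; ring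
      _ ≤ _ := h5
  calc A ≤ ‖s‖ * (z / s).re := h3
    _ ≤ ‖s‖ * (‖z‖ / ‖s‖) :=
        mul_le_mul_of_nonneg_left hrele hspos.le
    _ = ‖z‖ := by field_simp
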